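/- Along trajectories of the 2D system, the ratio z = w₂/w₁ evolves autonomously: ż = −βz² − qδz + (β + (1-q)δ), where β = qc + (1-q)v. -/

import Mathlib

theorem stmt11 (v c δ q : ℝ) (hv : 0 < v) (hc : c < 0) (hvc : |c| < v)
    (hvδ : |δ| < v) (hq1 : 1 / 2 < q) (hq2 : q ≤ 1)
    (w1 w2 : ℝ → ℝ) (t : ℝ)
    (hw1 : HasDerivAt w1 ((q * (v + δ) + (1 - q) * c) * w1 t + (q * c + (1 - q) * v) * w2 t
      - (v * (w1 t) ^ 2 + 2 * c * (w1 t) * (w2 t) + v * (w2 t) ^ 2) * w1 t) t)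
    (hw2 : HasDerivAt w2 (((1 - q) * (v + δ) + q * c) * w1 t + ((1 - q) * c + q * v) * w2 t
      - (v * (w1 t) ^ 2 + 2 * c * (w1 t) * (w2 t) + v * (w2 t) ^ 2) * w2 t) t)
    (h0 : w1 t ≠ 0) :
    HasDerivAt (fun s => w2 s / w1 s)
      (-(q * c + (1 - q) * v) * (w2 t / w1 t) ^ 2 - q * δ * (w2 t / w1 t)
        + ((q * c + (1 - q) * v) + (1 - q) * δ)) t := by
  have h : HasDerivAt (fun s => w2 s / w1 s) _ t := hw2.div hw1 h0
  convert h using 1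
  field_simp
  ring
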